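/- Let R be a commutative ring such that R[X] is reduced and every nonzero nonunit of R[X] is a finite product of very strongly irreducible elements. Then R is an integral domain. -/
import Mathlib

theorem domain_of_reduced_very_strongly_atomic_poly {R : Type*} [CommRing R] [Nontrivial R]
    (hred : IsReduced (Polynomial R))
    (hatomic : ∀ f : Polynomial R, f ≠ 0 → ¬IsUnit f →
      ∃ l : Multiset (Polynomial R),
        (∀ g ∈ l, g ≠ 0 ∧ ¬IsUnit g ∧ ∀ b c : Polynomial R, g = b * c → IsUnit b ∨ IsUnit c) ∧
        l.prod = f) :
    IsDomain R := by
  -- every very strongly irreducible element is a non-zero-divisor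
  have key : ∀ g : Polynomial R, g ≠ 0 → ¬IsUnit g →
      (∀ b c : Polynomial R, g = b * c → IsUnit b ∨ IsUnit c) →
      ∀ h : Polynomial R, g * h = 0 → h = 0 := by
    intro g hg0 hgu hirr h hgh
    by_contra hh
    have hfac : g = g * (1 + Polynomial.X * h) := by
      rw [mul_add, mul_one, mul_left_comm, hgh, mul_zero, add_zero]
    rcases hirr _ _ hfac with hu | hu
    · exact hgu hu
    · have := (Polynomial.coeff_isUnit_isNilpotent_of_isUnit hu).2
      have hz : h = 0 := by
        ext i
        have hn : IsNilpotent ((1 + Polynomial.X * h).coeff (i + 1)) := this (i + 1) (by omega)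
        have hc : (1 + Polynomial.X * h).coeff (i + 1) = h.coeff i := by
          simp [Polynomial.coeff_X_mul, Polynomial.coeff_one]
        rw [hc] at hn
        have : IsNilpotent (Polynomial.C (h.coeff i)) := by
          obtain ⟨n, hn⟩ := hn
          exact ⟨n, by rw [← map_pow, hn, map_zero]⟩
        have := hred.eq_zero _ this
        simpa using this
      exact hh hz
  have hnzd : NoZeroDivisors R := by
    constructor
    intro a b hab
    by_contra hcon
    push_neg at hcon
    obtain ⟨ha, hb⟩ := hcon
    have hCa : (Polynomial.C a : Polynomial R) ≠ 0 := by simpa using ha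
    have hCau : ¬IsUnit (Polynomial.C a : Polynomial R) := by
      rw [Polynomial.isUnit_C]
      intro hu
      exact hb (hu.mul_right_eq_zero.mp hab)
    obtain ⟨l, hl, hprod⟩ := hatomic _ hCa hCau
    -- prod of l is a non-zero-divisor
    have hreg : ∀ h : Polynomial R, l.prod * h = 0 → h = 0 := by
      clear hprod
      induction l using Multiset.induction with
      | empty => intro h hh; simpa using hh
      | cons g s ih =>
        intro h hh
        rw [Multiset.prod_cons, mul_assoc] at hh
        obtain ⟨hg0, hgu, hirr⟩ := hl g (Multiset.mem_cons_self g s)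
        have := key g hg0 hgu hirr _ hh
        exact ih (fun g hg => hl g (Multiset.mem_cons_of_mem hg)) h this
    have : (Polynomial.C b : Polynomial R) = 0 := by
      apply hreg
      rw [hprod, ← map_mul, hab, map_zero]
    exact hb (by simpa using this)
  exact NoZeroDivisors.to_isDomain R
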